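/- (Base case of Lemma 3, verified bounds.) Let n and f be integers with f ≥ 0 and n ≥ 5f + 1, and set N = ⌊(n+3f)/2⌋ + 1. Let W be a finite multiset of h real numbers with elements w_1 ≤ … ≤ w_h in nondecreasing order, and let R be a finite multiset of N real numbers containing a sub-multiset S with S a sub-multiset of W and |R| − |S| ≤ f. Let r_1 ≤ … ≤ r_N be the elements of R in nondecreasing order. Then h ≥ 2f + 1, the index N − 2f satisfies N − 2f ≥ 2f + 1, and: r_{f+1} ≥ w_1, r_{N−f} ≥ w_{N−2f} ≥ w_{2f+1}, and r_{N−f} ≤ w_h. Consequently the value v = (r_{f+1} + r_{N−f})/2 satisfies v ≥ (w_1 + w_{2f+1})/2. -/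

import Mathlib

lemma sorted_getD_mono {l : List ℝ} (hl : l.Pairwise (· ≤ ·)) {i j : ℕ}
    (hij : i ≤ j) (hj : j < l.length) : l.getD i 0 ≤ l.getD j 0 := by
  rw [List.getD_eq_getElem _ _ (lt_of_le_of_lt hij hj), List.getD_eq_getElem _ _ hj]
  exact hl.rel_get_of_le (a := ⟨i, lt_of_le_of_lt hij hj⟩) (b := ⟨j, hj⟩) hij

lemma mem_le_getD_last {l : List ℝ} (hl : l.Pairwise (· ≤ ·)) {x : ℝ} (hx : x ∈ l) :
    x ≤ l.getD (l.length - 1) 0 := by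
  obtain ⟨i, hi, rfl⟩ := List.getElem_of_mem hx
  have h1 : l.length - 1 < l.length := by omega
  rw [List.getD_eq_getElem _ _ h1]
  exact hl.rel_get_of_le (a := ⟨i, hi⟩) (b := ⟨l.length - 1, h1⟩) (by simp; omega)

lemma sublist_getD_le {l₁ l₂ : List ℝ} (h : l₁.Sublist l₂) (hs : l₂.Pairwise (· ≤ ·))
    {i : ℕ} (hi : i < l₁.length) : l₂.getD i 0 ≤ l₁.getD i 0 := by
  induction h generalizing i with
  | slnil => simp at hi
  | cons a h ih =>
    rename_i l₁ l₂
    have hs' : l₂.Pairwise (· ≤ ·) := hs.of_cons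
    have hlen : i < l₂.length := lt_of_lt_of_le hi h.length_le
    refine le_trans ?_ (ih hs' hi)
    cases i with
    | zero =>
      rw [List.getD_cons_zero, List.getD_eq_getElem _ _ hlen]
      exact (List.pairwise_cons.mp hs).1 _ (l₂.getElem_mem hlen)
    | succ k =>
      rw [List.getD_cons_succ]
      exact sorted_getD_mono hs' (by omega) hlen
  | cons_cons a h ih =>
    cases i with
    | zero => simp
    | succ k =>
      rw [List.getD_cons_succ, List.getD_cons_succ]
      exact ih hs.of_cons (by simpa using hi)

lemma sublist_getD_ge {l₁ l₂ : List ℝ} (h : l₁.Sublist l₂) (hs : l₂.Pairwise (· ≤ ·))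
    {i : ℕ} (hi : i < l₁.length) :
    l₁.getD i 0 ≤ l₂.getD (i + (l₂.length - l₁.length)) 0 := by
  induction h generalizing i with
  | slnil => simp at hi
  | cons a h ih =>
    rename_i l₁ l₂
    have hle := h.length_le
    have key : i + ((a :: l₂).length - l₁.length) = (i + (l₂.length - l₁.length)) + 1 := by
      simp only [List.length_cons]; omega
    rw [key, List.getD_cons_succ]
    exact ih hs.of_cons hi
  | cons_cons a h ih =>
    rename_i l₁ l₂
    have hle := h.length_le
    have hd : (a :: l₂).length - (a :: l₁).length = l₂.length - l₁.length := by
      simp only [List.length_cons]; omega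
    rw [hd]
    cases i with
    | zero =>
      rw [List.getD_cons_zero]
      rcases Nat.eq_zero_or_pos (l₂.length - l₁.length) with h0 | h0
      · simp [h0]
      · have he : 0 + (l₂.length - l₁.length) = (l₂.length - l₁.length - 1) + 1 := by omega
        rw [he, List.getD_cons_succ, List.getD_eq_getElem _ _ (by omega)]
        exact (List.pairwise_cons.mp hs).1 _ (l₂.getElem_mem (by omega))
    | succ k =>
      have he : k + 1 + (l₂.length - l₁.length) = (k + (l₂.length - l₁.length)) + 1 := by omega
      rw [he, List.getD_cons_succ, List.getD_cons_succ]
      exact ih hs.of_cons (by simpa using hi)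

/-- The `j`-th smallest element (1-indexed) of a finite multiset of reals. -/
noncomputable def mnth (W : Multiset ℝ) (j : ℕ) : ℝ :=
  (W.sort (· ≤ ·)).getD (j - 1) 0

/-- base case of Lemma 3, verified bounds. -/
theorem stmt_7 (n f : ℕ) (hn : 5 * f + 1 ≤ n) (N : ℕ)
    (hN : N = (n + 3 * f) / 2 + 1)
    (W R S : Multiset ℝ) (h : ℕ)
    (hWcard : Multiset.card W = h) (hRcard : Multiset.card R = N)
    (hSR : S ≤ R) (hSW : S ≤ W) (hf : N - Multiset.card S ≤ f) :
    2 * f + 1 ≤ h ∧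
    2 * f + 1 ≤ N - 2 * f ∧
    mnth W 1 ≤ mnth R (f + 1) ∧
    mnth W (N - 2 * f) ≤ mnth R (N - f) ∧
    mnth W (2 * f + 1) ≤ mnth W (N - 2 * f) ∧
    mnth R (N - f) ≤ mnth W h ∧
    (mnth W 1 + mnth W (2 * f + 1)) / 2 ≤ (mnth R (f + 1) + mnth R (N - f)) / 2 := by
  set c := Multiset.card S with hc
  have hcR : c ≤ N := by rw [← hRcard]; exact Multiset.card_le_card hSR
  have hcW : c ≤ h := by rw [← hWcard]; exact Multiset.card_le_card hSW
  have hNge : 4 * f + 1 ≤ N := by omega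
  have hcge : N - f ≤ c := by omega
  -- sorted lists
  set LW := W.sort (· ≤ ·) with hLW
  set LR := R.sort (· ≤ ·) with hLR
  set LS := S.sort (· ≤ ·) with hLS
  have sW : LW.Pairwise (· ≤ ·) := Multiset.pairwise_sort _ _
  have sR : LR.Pairwise (· ≤ ·) := Multiset.pairwise_sort _ _
  have sS : LS.Pairwise (· ≤ ·) := Multiset.pairwise_sort _ _
  have lenW : LW.length = h := by rw [hLW, Multiset.length_sort, hWcard]
  have lenR : LR.length = N := by rw [hLR, Multiset.length_sort, hRcard]
  have lenS : LS.length = c := by rw [hLS, Multiset.length_sort]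
  have subR : LS.Sublist LR := by
    refine List.sublist_of_subperm_of_pairwise ?_ sS sR
    rw [← Multiset.coe_le, Multiset.sort_eq, Multiset.sort_eq]; exact hSR
  have subW : LS.Sublist LW := by
    refine List.sublist_of_subperm_of_pairwise ?_ sS sW
    rw [← Multiset.coe_le, Multiset.sort_eq, Multiset.sort_eq]; exact hSW
  have hdR : LR.length - LS.length = N - c := by omega
  -- goal 3 : w_1 ≤ r_{f+1}
  have g3 : mnth W 1 ≤ mnth R (f + 1) := by
    show LW.getD 0 0 ≤ LR.getD (f + 1 - 1) 0
    have h1 : LW.getD 0 0 ≤ LS.getD 0 0 := sublist_getD_le subW sW (by omega)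
    have h2 : LS.getD 0 0 ≤ LR.getD (0 + (N - c)) 0 := by
      rw [← hdR]; exact sublist_getD_ge subR sR (by omega)
    have h3 : LR.getD (0 + (N - c)) 0 ≤ LR.getD (f + 1 - 1) 0 :=
      sorted_getD_mono sR (by omega) (by omega)
    linarith
  -- goal 4 : w_{N-2f} ≤ r_{N-f}
  have g4 : mnth W (N - 2 * f) ≤ mnth R (N - f) := by
    show LW.getD (N - 2 * f - 1) 0 ≤ LR.getD (N - f - 1) 0
    have h1 : LW.getD (N - 2 * f - 1) 0 ≤ LS.getD (N - 2 * f - 1) 0 :=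
      sublist_getD_le subW sW (by omega)
    have h2 : LS.getD (N - 2 * f - 1) 0 ≤ LR.getD ((N - 2 * f - 1) + (N - c)) 0 := by
      rw [← hdR]; exact sublist_getD_ge subR sR (by omega)
    have h3 : LR.getD ((N - 2 * f - 1) + (N - c)) 0 ≤ LR.getD (N - f - 1) 0 :=
      sorted_getD_mono sR (by omega) (by omega)
    linarith
  -- goal 5 : w_{2f+1} ≤ w_{N-2f}
  have g5 : mnth W (2 * f + 1) ≤ mnth W (N - 2 * f) := by
    show LW.getD (2 * f + 1 - 1) 0 ≤ LW.getD (N - 2 * f - 1) 0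
    exact sorted_getD_mono sW (by omega) (by omega)
  -- goal 6 : r_{N-f} ≤ w_h
  have g6 : mnth R (N - f) ≤ mnth W h := by
    show LR.getD (N - f - 1) 0 ≤ LW.getD (h - 1) 0
    have h1 : LR.getD (N - f - 1) 0 ≤ LR.getD (c - 1) 0 :=
      sorted_getD_mono sR (by omega) (by omega)
    have h2 : LR.getD (c - 1) 0 ≤ LS.getD (c - 1) 0 :=
      sublist_getD_le subR sR (by omega)
    have hmem : LS.getD (c - 1) 0 ∈ LW := by
      apply subW.mem
      rw [List.getD_eq_getElem _ _ (by omega)]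
      exact LS.getElem_mem _
    have h3 : LS.getD (c - 1) 0 ≤ LW.getD (h - 1) 0 := by
      have := mem_le_getD_last sW hmem
      rwa [lenW] at this
    linarith
  have g1 : 2 * f + 1 ≤ h := by omega
  refine ⟨g1, by omega, g3, g4, g5, g6, by linarith⟩
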